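/- As z → −1 with Im z > 0, one has d₁(z) = e^{−βπi}·4^{−β}·(z+1)^{β}·(1 + (β/2)(z+1) + O((z+1)²)) and d₂(z) = e^{βπi}·4^{β}·(z+1)^{−β}·(1 − (β/2)(z+1) + O((z+1)²)), where (z+1)^{±β} and 4^{±β} are principal branches. -/

import Mathlib

open Complex Filter Topology Set Asymptotics

/-- `β = ln(1-γ)/(2πi)`. -/
noncomputable def beta (γ : ℝ) : ℂ := Complex.log (1 - γ) / (2 * Real.pi * Complex.I)

/-- `λ(ζ) = ((ζ-i)/(ζ+i))^β`, principal branch. -/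
noncomputable def lam (γ : ℝ) (ζ : ℂ) : ℂ := ((ζ - Complex.I) / (ζ + Complex.I)) ^ (beta γ)

/-- `d₁(z) = λ(z^{1/2})`, principal branch of the square root. -/
noncomputable def d1 (γ : ℝ) (z : ℂ) : ℂ := lam γ (z ^ ((1 : ℂ)/2))

/-- `d₂(z) = λ(-z^{1/2})`, principal branch of the square root. -/
noncomputable def d2 (γ : ℝ) (z : ℂ) : ℂ := lam γ (-(z ^ ((1 : ℂ)/2)))

namespace GapAux


lemma ne_zero_of_im_pos {z : ℂ} (hz : 0 < z.im) : z ≠ 0 := by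
  intro h; rw [h] at hz; simp at hz

lemma arg_pos_of_im_pos {z : ℂ} (hz : 0 < z.im) : 0 < z.arg := by
  rcases (Complex.arg_nonneg_iff.2 hz.le).lt_or_eq with h | h
  · exact h
  · exact absurd (Complex.arg_eq_zero_iff.1 h.symm).2 (by linarith)

lemma arg_lt_pi_of_im_pos {z : ℂ} (hz : 0 < z.im) : z.arg < Real.pi :=
  Complex.arg_lt_pi_iff.2 (Or.inr hz.ne')

lemma log_eq {z : ℂ} (hz : 0 < z.im) :
    Complex.log z = Complex.log (-z) + Real.pi * Complex.I := by
  have hz0 : z ≠ 0 := ne_zero_of_im_pos hz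
  have h1 : Complex.exp (Complex.log (-z) + Real.pi * Complex.I) = z := by
    rw [Complex.exp_add, Complex.exp_log (neg_ne_zero.2 hz0), Complex.exp_pi_mul_I]; ring
  have h2 : (Complex.log (-z) + Real.pi * Complex.I).im = z.arg := by
    simp [Complex.add_im, Complex.log_im, Complex.arg_neg_eq_arg_sub_pi_of_im_pos hz]
  conv_lhs => rw [← h1]
  exact Complex.log_exp (by rw [h2]; linarith [arg_pos_of_im_pos hz, Real.pi_pos])
    (by rw [h2]; exact Complex.arg_le_pi z)

lemma sqrt_eq {z : ℂ} (hz : 0 < z.im) :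
    z ^ ((1:ℂ)/2) = Complex.I * (-z) ^ ((1:ℂ)/2) := by
  have hz0 : z ≠ 0 := ne_zero_of_im_pos hz
  have hz0' : -z ≠ 0 := neg_ne_zero.2 hz0
  have hI : Complex.exp ((Real.pi : ℂ) * Complex.I * (1/2)) = Complex.I := by
    rw [show (Real.pi:ℂ) * Complex.I * (1/2) = ((Real.pi/2 : ℝ):ℂ) * Complex.I by
        push_cast; ring,
      Complex.exp_mul_I, ← Complex.ofReal_cos, ← Complex.ofReal_sin,
      Real.cos_pi_div_two, Real.sin_pi_div_two]
    simp
  calc z ^ ((1:ℂ)/2)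
      = Complex.exp ((Complex.log (-z) + Real.pi * Complex.I) * (1/2)) := by
        rw [Complex.cpow_def_of_ne_zero hz0, log_eq hz]
    _ = Complex.exp ((Real.pi:ℂ) * Complex.I * (1/2)) *
          Complex.exp (Complex.log (-z) * (1/2)) := by
        rw [← Complex.exp_add]; congr 1; ring
    _ = Complex.I * (-z) ^ ((1:ℂ)/2) := by
        rw [hI, Complex.cpow_def_of_ne_zero hz0']

lemma sqrt_neg_re_im {z : ℂ} (hz : 0 < z.im) :
    0 < ((-z) ^ ((1:ℂ)/2)).re ∧ ((-z) ^ ((1:ℂ)/2)).im < 0 := by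
  have hz0' : -z ≠ 0 := neg_ne_zero.2 (ne_zero_of_im_pos hz)
  have harg1 : Complex.arg (-z) < 0 := Complex.arg_neg_iff.2 (by simp [hz])
  have harg2 : -Real.pi < Complex.arg (-z) := Complex.neg_pi_lt_arg _
  rw [Complex.cpow_def_of_ne_zero hz0']
  have hLim : (Complex.log (-z) * (1/2)).im = Complex.arg (-z) / 2 := by
    simp [Complex.mul_im, Complex.log_im]
    ring
  constructor
  · rw [Complex.exp_re, hLim]
    exact mul_pos (Real.exp_pos _)
      (Real.cos_pos_of_mem_Ioo ⟨by linarith, by linarith [Real.pi_pos]⟩)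
  · rw [Complex.exp_im, hLim]
    exact mul_neg_of_pos_of_neg (Real.exp_pos _)
      (Real.sin_neg_of_neg_of_neg_pi_lt (by linarith) (by linarith [Real.pi_pos]))


lemma master (b : ℂ) {z : ℂ} (hz : 0 < z.im) :
    ((z ^ ((1:ℂ)/2) - Complex.I) / (z ^ ((1:ℂ)/2) + Complex.I)) ^ b
      = Complex.exp (-b * Real.pi * Complex.I) * (4:ℂ) ^ (-b) * (z + 1) ^ b *
        (4 * (((1 - (z + 1)) ^ ((1:ℂ)/2) + 1) ^ 2)⁻¹) ^ b
    ∧ ((z ^ ((1:ℂ)/2) - Complex.I) / (z ^ ((1:ℂ)/2) + Complex.I)).arg ≠ Real.pi := by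
  have hz0 : z ≠ 0 := ne_zero_of_im_pos hz
  set s : ℂ := (-z) ^ ((1:ℂ)/2) with hs
  obtain ⟨hsre, hsim⟩ := sqrt_neg_re_im hz
  have hs1 : s + 1 ≠ 0 := by
    intro h
    have : (s + 1).re = 0 := by rw [h]; simp
    rw [Complex.add_re, Complex.one_re] at this
    linarith
  have hss : s * s = -z := by
    rw [hs, ← Complex.cpow_add _ _ (neg_ne_zero.2 hz0)]
    norm_num
  set w : ℂ := z + 1 with hw
  have hwim : 0 < w.im := by
    rw [hw, Complex.add_im, Complex.one_im]; linarith
  have hw0 : w ≠ 0 := ne_zero_of_im_pos hwim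
  set q : ℂ := ((s + 1) ^ 2)⁻¹ with hq
  have hq0 : q ≠ 0 := inv_ne_zero (pow_ne_zero 2 hs1)
  have hqim : 0 < q.im := by
    rw [hq, Complex.inv_im]
    apply div_pos
    · have h2 : ((s + 1) ^ 2).im = 2 * (s + 1).re * (s + 1).im := by
        rw [sq, Complex.mul_im]; ring
      rw [h2, Complex.add_re, Complex.add_im, Complex.one_re, Complex.one_im]
      nlinarith
    · exact Complex.normSq_pos.2 (pow_ne_zero 2 hs1)
  have key : (s - 1) * (s + 1) = -w := by rw [hw]; linear_combination hss
  have hu : (z ^ ((1:ℂ)/2) - Complex.I) / (z ^ ((1:ℂ)/2) + Complex.I) = -(w * q) := by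
    rw [sqrt_eq hz, ← hs,
      show Complex.I * s - Complex.I = Complex.I * (s - 1) by ring,
      show Complex.I * s + Complex.I = Complex.I * (s + 1) by ring,
      mul_div_mul_left _ _ Complex.I_ne_zero, hq]
    rw [div_eq_iff hs1, ← neg_mul, ← key]
    field_simp
  have hwq0 : -(w * q) ≠ 0 := neg_ne_zero.2 (mul_ne_zero hw0 hq0)
  have hexp : Complex.exp (Complex.log w + Complex.log q - Real.pi * Complex.I)
      = -(w * q) := by
    rw [Complex.exp_sub, Complex.exp_add, Complex.exp_log hw0, Complex.exp_log hq0,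
      Complex.exp_pi_mul_I]
    field_simp
  have him : (Complex.log w + Complex.log q - Real.pi * Complex.I).im
      = w.arg + q.arg - Real.pi := by
    simp [Complex.sub_im, Complex.add_im, Complex.log_im]
  have hlogu : Complex.log (-(w * q))
      = Complex.log w + Complex.log q - Real.pi * Complex.I := by
    conv_lhs => rw [← hexp]
    exact Complex.log_exp
      (by rw [him]; linarith [arg_pos_of_im_pos hwim, arg_pos_of_im_pos hqim])
      (by rw [him]; linarith [Complex.arg_le_pi w, Complex.arg_le_pi q])
  have hargu : (-(w * q)).arg ≠ Real.pi := by
    have h3 : (-(w * q)).arg = w.arg + q.arg - Real.pi := by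
      rw [← Complex.log_im, hlogu, him]
    rw [h3]
    have := arg_lt_pi_of_im_pos hwim
    have := arg_lt_pi_of_im_pos hqim
    intro h4
    linarith
  have hcpow : (-(w * q)) ^ b
      = Complex.exp (-b * Real.pi * Complex.I) * w ^ b * q ^ b := by
    rw [Complex.cpow_def_of_ne_zero hwq0, Complex.cpow_def_of_ne_zero hw0,
      Complex.cpow_def_of_ne_zero hq0, hlogu, ← Complex.exp_add, ← Complex.exp_add]
    congr 1; ring
  have h4q0 : (4:ℂ) * q ≠ 0 := mul_ne_zero (by norm_num) hq0
  have hlog4q : Complex.log (4 * q) = (Real.log 4 : ℂ) + Complex.log q := by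
    rw [show (4:ℂ) = ((4:ℝ) : ℂ) by norm_num, Complex.log_ofReal_mul (by norm_num) hq0]
  have hlog4 : Complex.log (4:ℂ) = (Real.log 4 : ℂ) := by
    rw [show (4:ℂ) = ((4:ℝ):ℂ) by norm_num, Complex.ofReal_log (by norm_num : (0:ℝ) ≤ 4)]
  have hqb : q ^ b = (4:ℂ) ^ (-b) * (4 * q) ^ b := by
    rw [Complex.cpow_def_of_ne_zero hq0, Complex.cpow_def_of_ne_zero h4q0,
      Complex.cpow_def_of_ne_zero (by norm_num : (4:ℂ) ≠ 0), hlog4q, hlog4,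
      ← Complex.exp_add]
    congr 1; ring
  have hnw : (1:ℂ) - w = -z := by rw [hw]; ring
  refine ⟨?_, by rw [hu]; exact hargu⟩
  rw [hu, hcpow, hnw, ← hs, ← hq, hqb]
  ring



noncomputable def phi (b : ℂ) (w : ℂ) : ℂ :=
  (4 * (((1 - w) ^ ((1:ℂ)/2) + 1) ^ 2)⁻¹) ^ b

lemma phi_analytic (b : ℂ) : AnalyticAt ℂ (phi b) 0 := by
  have h1 : AnalyticAt ℂ (fun w : ℂ => (1 - w) ^ ((1:ℂ)/2)) 0 := by
    apply (analyticAt_const.sub analyticAt_id).cpow analyticAt_const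
    simp [Complex.mem_slitPlane_iff]
  have h2 : AnalyticAt ℂ (fun w : ℂ => 4 * ((((1 - w) ^ ((1:ℂ)/2)) + 1) ^ 2)⁻¹) 0 := by
    apply analyticAt_const.mul
    apply AnalyticAt.inv ((h1.add analyticAt_const).pow 2)
    norm_num [Complex.one_cpow]
  exact h2.cpow analyticAt_const (by norm_num [Complex.one_cpow, Complex.mem_slitPlane_iff])

lemma phi_zero (b : ℂ) : phi b 0 = 1 := by
  rw [phi]
  norm_num [Complex.one_cpow]

lemma phi_hasDeriv (b : ℂ) : HasDerivAt (phi b) (b / 2) 0 := by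
  have h1 : HasDerivAt (fun w : ℂ => 1 - w) (-1) 0 := (hasDerivAt_id 0).const_sub 1
  have h2 : HasDerivAt (fun w : ℂ => (1 - w) ^ ((1:ℂ)/2)) (-(1/2)) 0 := by
    have := h1.cpow_const (c := (1:ℂ)/2) (by norm_num [Complex.mem_slitPlane_iff])
    convert this using 1
    norm_num [Complex.one_cpow]
  have h3 : HasDerivAt (fun w : ℂ => (1 - w) ^ ((1:ℂ)/2) + 1) (-(1/2)) 0 := h2.add_const 1
  have h4 : HasDerivAt (fun w : ℂ => ((1 - w) ^ ((1:ℂ)/2) + 1) ^ 2) (-2) 0 := by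
    have := h3.pow 2
    exact this.congr_deriv (by norm_num [Complex.one_cpow])
  have h5 : HasDerivAt (fun w : ℂ => (((1 - w) ^ ((1:ℂ)/2) + 1) ^ 2)⁻¹) (1/8) 0 := by
    have := h4.inv (by norm_num [Complex.one_cpow])
    exact this.congr_deriv (by norm_num [Complex.one_cpow])
  have h6 : HasDerivAt (fun w : ℂ => 4 * (((1 - w) ^ ((1:ℂ)/2) + 1) ^ 2)⁻¹) (1/2) 0 := by
    have := h5.const_mul (4:ℂ)
    exact this.congr_deriv (by norm_num)
  have h7 := h6.cpow_const (c := b) (by norm_num [Complex.one_cpow, Complex.mem_slitPlane_iff])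
  have : HasDerivAt (phi b) (b * (4 * (((1 - (0:ℂ)) ^ ((1:ℂ)/2) + 1) ^ 2)⁻¹) ^ (b-1) * (1/2)) 0 := h7
  convert this using 1
  norm_num [Complex.one_cpow]
  ring

lemma phi_taylor (b : ℂ) :
    (fun w : ℂ => phi b w - (1 + b / 2 * w)) =O[𝓝 (0:ℂ)] fun w => w ^ 2 := by
  obtain ⟨p, hp⟩ := phi_analytic b
  have h := hp.isBigO_sub_partialSum_pow 2
  have hps : ∀ y : ℂ, p.partialSum 2 y = 1 + b / 2 * y := by
    intro y
    have h0 : (p 0 fun _ => y) = phi b 0 := hp.coeff_zero _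
    have h1 : (p 1 fun _ => y) = y ^ 1 • p.coeff 1 := p.apply_eq_pow_smul_coeff
    have hc1 : p.coeff 1 = b / 2 := by
      have hd : deriv (phi b) 0 = p 1 fun _ => 1 := hp.deriv
      have h2 : p.coeff 1 = deriv (phi b) 0 := by rw [hd]; rfl
      rw [h2, (phi_hasDeriv b).deriv]
    rw [FormalMultilinearSeries.partialSum, Finset.sum_range_succ, Finset.sum_range_one,
      h0, h1, hc1, phi_zero]
    simp [smul_eq_mul]
    ring
  have h2 : (fun w : ℂ => phi b w - (1 + b / 2 * w)) =O[𝓝 (0:ℂ)] fun y : ℂ => ‖y‖ ^ 2 := by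
    refine h.congr' ?_ EventuallyEq.rfl
    filter_upwards with y
    rw [hps y, zero_add]
  refine h2.trans ?_
  rw [Asymptotics.isBigO_iff]
  refine ⟨1, ?_⟩
  filter_upwards with y
  simp [norm_pow]

end GapAux

open GapAux

/-- As `z → -1` with `Im z > 0`,
`d₁(z) = e^{-βπi} 4^{-β} (z+1)^{β} (1 + (β/2)(z+1) + O((z+1)²))` and
`d₂(z) = e^{βπi} 4^{β} (z+1)^{-β} (1 - (β/2)(z+1) + O((z+1)²))`. -/
theorem gap_tacnode_d1_d2_asymptotics_at_minus_one (γ : ℝ) (hγ : γ ∈ Set.Ioo (0:ℝ) 1) :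
    (fun z : ℂ => d1 γ z -
        Complex.exp (-(beta γ) * Real.pi * Complex.I) * (4:ℂ) ^ (-(beta γ)) *
          (z + 1) ^ (beta γ) * (1 + (beta γ / 2) * (z + 1)))
      =O[𝓝[{z : ℂ | 0 < z.im}] (-1:ℂ)]
        (fun z : ℂ => (z + 1) ^ (beta γ) * (z + 1)^2) ∧
    (fun z : ℂ => d2 γ z -
        Complex.exp ((beta γ) * Real.pi * Complex.I) * (4:ℂ) ^ (beta γ) *
          (z + 1) ^ (-(beta γ)) * (1 - (beta γ / 2) * (z + 1)))
      =O[𝓝[{z : ℂ | 0 < z.im}] (-1:ℂ)]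
        (fun z : ℂ => (z + 1) ^ (-(beta γ)) * (z + 1)^2) := by
  set β := beta γ with hβ
  set l := 𝓝[{z : ℂ | 0 < z.im}] (-1 : ℂ) with hl
  have hmem : ∀ᶠ z in l, 0 < z.im := eventually_mem_nhdsWithin
  have htend : Tendsto (fun z : ℂ => z + 1) l (𝓝 0) := by
    have h1 : Tendsto (fun z : ℂ => z + 1) (𝓝 (-1:ℂ)) (𝓝 0) := by
      have h0 : Continuous (fun z : ℂ => z + 1) := continuous_id.add continuous_const
      simpa using h0.tendsto (-1 : ℂ)
    exact h1.mono_left nhdsWithin_le_nhds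
  constructor
  · have hEq : (fun z : ℂ =>
        Complex.exp (-β * Real.pi * Complex.I) * (4:ℂ) ^ (-β) * (z + 1) ^ β *
          (phi β (z + 1) - (1 + β / 2 * (z + 1))))
        =ᶠ[l] (fun z : ℂ => d1 γ z -
          Complex.exp (-β * Real.pi * Complex.I) * (4:ℂ) ^ (-β) *
            (z + 1) ^ β * (1 + (β / 2) * (z + 1))) := by
      filter_upwards [hmem] with z hz
      have hm := (master β hz).1
      simp only [d1, lam, ← hβ] at hm ⊢
      rw [hm, phi]
      ring
    have h1 : (fun z : ℂ => phi β (z + 1) - (1 + β / 2 * (z + 1)))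
        =O[l] fun z => (z + 1) ^ 2 := (phi_taylor β).comp_tendsto htend
    have h2 : (fun z : ℂ => Complex.exp (-β * Real.pi * Complex.I) * (4:ℂ) ^ (-β) * (z + 1) ^ β)
        =O[l] fun z => (z + 1) ^ β :=
      (isBigO_refl (fun z : ℂ => (z + 1) ^ β) l).const_mul_left _
    exact (h2.mul h1).congr' hEq EventuallyEq.rfl
  · have hEq : (fun z : ℂ =>
        Complex.exp (β * Real.pi * Complex.I) * (4:ℂ) ^ β * (z + 1) ^ (-β) *
          (phi (-β) (z + 1) - (1 + (-β) / 2 * (z + 1))))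
        =ᶠ[l] (fun z : ℂ => d2 γ z -
          Complex.exp (β * Real.pi * Complex.I) * (4:ℂ) ^ β *
            (z + 1) ^ (-β) * (1 - (β / 2) * (z + 1))) := by
      filter_upwards [hmem] with z hz
      obtain ⟨hm, harg⟩ := master (-β) hz
      have hbase : (-(z ^ ((1:ℂ)/2)) - Complex.I) / (-(z ^ ((1:ℂ)/2)) + Complex.I)
          = ((z ^ ((1:ℂ)/2) - Complex.I) / (z ^ ((1:ℂ)/2) + Complex.I))⁻¹ := by
        rw [inv_div, ← neg_div_neg_eq]
        congr 1 <;> ring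
      have hd2 : d2 γ z
          = ((z ^ ((1:ℂ)/2) - Complex.I) / (z ^ ((1:ℂ)/2) + Complex.I)) ^ (-β) := by
        simp only [d2, lam, ← hβ]
        rw [hbase, Complex.inv_cpow _ _ harg, ← Complex.cpow_neg]
      rw [hd2, hm, phi]
      rw [neg_neg]
      ring
    have h1 : (fun z : ℂ => phi (-β) (z + 1) - (1 + (-β) / 2 * (z + 1)))
        =O[l] fun z => (z + 1) ^ 2 := (phi_taylor (-β)).comp_tendsto htend
    have h2 : (fun z : ℂ => Complex.exp (β * Real.pi * Complex.I) * (4:ℂ) ^ β * (z + 1) ^ (-β))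
        =O[l] fun z => (z + 1) ^ (-β) :=
      (isBigO_refl (fun z : ℂ => (z + 1) ^ (-β)) l).const_mul_left _
    exact (h2.mul h1).congr' hEq EventuallyEq.rfl
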